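/- Let T ∈ B(X) and S ∈ B(Y) be compact operators on Banach spaces that are equivalent after extension. Then T has finite rank if and only if S has finite rank. -/

import Mathlib

open ContinuousLinearMap Set

/-- A compact operator with closed range has finite dimensional range. -/
lemma fd_of_compact_closedRange {X Y : Type*} [NormedAddCommGroup X] [NormedSpace ℂ X]
    [CompleteSpace X] [NormedAddCommGroup Y] [NormedSpace ℂ Y] [CompleteSpace Y]
    (T : X →L[ℂ] Y) (hT : IsCompactOperator T)
    (h : IsClosed (Set.range T)) : FiniteDimensional ℂ (LinearMap.range (T : X →ₗ[ℂ] Y)) := by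
  set R : Submodule ℂ Y := LinearMap.range (T : X →ₗ[ℂ] Y) with hR
  have hRc : IsClosed (R : Set Y) := h
  haveI : CompleteSpace R := hRc.completeSpace_coe
  set Tbar : X →L[ℂ] R := T.codRestrict R (fun x => LinearMap.mem_range_self _ x) with hTbar
  have hsurj : Function.Surjective Tbar := by
    rintro ⟨y, x, rfl⟩
    exact ⟨x, rfl⟩
  have hopen : IsOpenMap Tbar := Tbar.isOpenMap hsurj
  obtain ⟨K, hK, hKmem⟩ := hT
  obtain ⟨s, hs, hsub⟩ := Metric.mem_nhds_iff.1 hKmem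
  have hU : Tbar '' Metric.ball 0 s ∈ nhds (0 : R) := by
    refine (hopen _ Metric.isOpen_ball).mem_nhds ⟨0, Metric.mem_ball_self hs, map_zero _⟩
  obtain ⟨r, hr, hball⟩ := (Metric.nhds_basis_closedBall.mem_iff).1 hU
  have hKpre : IsCompact (Subtype.val ⁻¹' K : Set R) :=
    hRc.isClosedEmbedding_subtypeVal.isProperMap.isCompact_preimage hK
  have hsubK : Metric.closedBall (0 : R) r ⊆ Subtype.val ⁻¹' K := by
    intro y hy
    obtain ⟨x, hx, rfl⟩ := hball hy
    exact hsub hx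
  have hcpt : IsCompact (Metric.closedBall (0 : R) r) :=
    hKpre.of_isClosed_subset Metric.isClosed_closedBall hsubK
  exact FiniteDimensional.of_isCompact_closedBall₀ ℂ hr hcpt

lemma closed_range_prodMap_id {X Y Z : Type*} [NormedAddCommGroup X] [NormedSpace ℂ X]
    [NormedAddCommGroup Y] [NormedSpace ℂ Y] [NormedAddCommGroup Z] [NormedSpace ℂ Z]
    (T : X →L[ℂ] Y) :
    IsClosed (Set.range (T.prodMap (ContinuousLinearMap.id ℂ Z))) ↔ IsClosed (Set.range T) := by
  have hco : ⇑(T.prodMap (ContinuousLinearMap.id ℂ Z)) = Prod.map T id := rfl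
  rw [hco, Set.range_prodMap, Set.range_id]
  constructor
  · intro hcl
    have : Set.range T = (fun y : Y => (y, (0 : Z))) ⁻¹' (Set.range T ×ˢ (univ : Set Z)) := by
      ext y; simp
    rw [this]
    exact hcl.preimage (by fun_prop)
  · intro hcl
    exact hcl.prod isClosed_univ

/-- Compact operators that are equivalent after extension have
finite rank simultaneously. -/
theorem finite_rank_iff_of_equivalent_after_extension
    (X Y : Type*) [NormedAddCommGroup X] [NormedSpace ℂ X] [CompleteSpace X]
    [NormedAddCommGroup Y] [NormedSpace ℂ Y] [CompleteSpace Y]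
    (T : X →L[ℂ] X) (S : Y →L[ℂ] Y)
    (hT : IsCompactOperator T) (hS : IsCompactOperator S)
    (hEAE : ∃ (E : (Y × X) ≃L[ℂ] (X × Y)) (F : (X × Y) ≃L[ℂ] (Y × X)),
      T.prodMap (ContinuousLinearMap.id ℂ Y) =
        (E : (Y × X) →L[ℂ] (X × Y)) ∘L
          (S.prodMap (ContinuousLinearMap.id ℂ X)) ∘L
            (F : (X × Y) →L[ℂ] (Y × X))) :
    FiniteDimensional ℂ (LinearMap.range (T : X →ₗ[ℂ] X)) ↔ FiniteDimensional ℂ (LinearMap.range (S : Y →ₗ[ℂ] Y)) := by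
  obtain ⟨E, F, hEF⟩ := hEAE
  -- ranges of the two extended operators are homeomorphic images of each other
  have hrange : Set.range (T.prodMap (ContinuousLinearMap.id ℂ Y)) =
      ⇑E '' Set.range (S.prodMap (ContinuousLinearMap.id ℂ X)) := by
    rw [hEF]
    have : ⇑((E : (Y × X) →L[ℂ] (X × Y)) ∘L
          (S.prodMap (ContinuousLinearMap.id ℂ X)) ∘L (F : (X × Y) →L[ℂ] (Y × X)))
        = ⇑E ∘ ⇑(S.prodMap (ContinuousLinearMap.id ℂ X)) ∘ ⇑F := rfl
    rw [this, Set.range_comp, Set.range_comp, Set.range_eq_univ.2 F.surjective,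
      Set.image_univ]
  have hclosed_iff : IsClosed (Set.range T) ↔ IsClosed (Set.range S) := by
    rw [← closed_range_prodMap_id (Z := Y) T, ← closed_range_prodMap_id (Z := X) S, hrange,
      E.toHomeomorph.isClosedEmbedding.isClosed_iff_image_isClosed]
    rfl
  constructor
  · intro hfd
    refine fd_of_compact_closedRange S hS ?_
    rw [← hclosed_iff]
    exact (LinearMap.range (T : X →ₗ[ℂ] X)).closed_of_finiteDimensional
  · intro hfd
    refine fd_of_compact_closedRange T hT ?_
    rw [hclosed_iff]
    exact (LinearMap.range (S : Y →ₗ[ℂ] Y)).closed_of_finiteDimensional
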